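/- In the setting of the Dehornoy-type inductive limit (functions k, l : ℤ → ℤ with k(n), l(n) ≥ 2, presented group G̃ with generators gₙ (n ∈ ℤ) and relations g_{n-1}^{k(n)} = g_n^{l(n)}, and elements a_{i,m}), the following identities hold in G̃: (i) for every m ≥ 0 and every i with -m ≤ i ≤ m-1, a_{i,m} = a_{i+1,m} · g_{i+1}^{l(i+1)-1}; (ii) for every m ≥ 0 and every i with -m ≤ i ≤ m, a_{i,m} = g_{-m-1}^{k(-m)-1} · a_{i,m+1}. -/

import Mathlib

/-- The relators `g_{n-1}^{k n} * g_n^{-(l n)}` of the Dehornoy-type inductive limit. -/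
def dehornoyRels (k l : ℤ → ℤ) : Set (FreeGroup ℤ) :=
  {r | ∃ n : ℤ, r = FreeGroup.of (n - 1) ^ k n * FreeGroup.of n ^ (-(l n))}

/-- The presented group `G̃` with generators `gₙ (n : ℤ)` and relations
`g_{n-1}^{k n} = g_n^{l n}`. -/
abbrev Gtil (k l : ℤ → ℤ) : Type := PresentedGroup (dehornoyRels k l)

/-- The image `gₙ` in `G̃` of the `n`-th generator. -/
def gg (k l : ℤ → ℤ) (n : ℤ) : Gtil k l := PresentedGroup.of n

/-- The element `a_{i,m} = g_{-m}^{-(k(-m+1)-1)} ⋯ g_{i-1}^{-(k i - 1)} * g_i` of `G̃`. -/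
def aElt (k l : ℤ → ℤ) (i m : ℤ) : Gtil k l :=
  (((List.range (i + m).toNat).map
      (fun t => gg k l (-m + (t : ℤ)) ^ (-(k (-m + (t : ℤ) + 1) - 1)))).prod) * gg k l i

/-- The generating set `{a_{i,m} : m ≥ 0, -m ≤ i ≤ m}` of the positive cone. -/
def aGenSet (k l : ℤ → ℤ) : Set (Gtil k l) :=
  {x | ∃ m i : ℤ, 0 ≤ m ∧ -m ≤ i ∧ i ≤ m ∧ x = aElt k l i m}

/-- The subsemigroup `P̃` of `G̃` generated by the `a_{i,m}`, viewed as a set. -/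
def Ptil (k l : ℤ → ℤ) : Set (Gtil k l) :=
  (Subsemigroup.closure (aGenSet k l) : Subsemigroup (Gtil k l))

/-- The subgroup `G_(m)` of `G̃` generated by `g_{-m}, …, g_m`. -/
def Gsub (k l : ℤ → ℤ) (m : ℤ) : Subgroup (Gtil k l) :=
  Subgroup.closure {x | ∃ j : ℤ, -m ≤ j ∧ j ≤ m ∧ x = gg k l j}

/-- `P` is a positive cone of the group `G`: it is closed under multiplication and
`G` is the disjoint union of `P`, `P⁻¹` and `{1}`. -/
def IsPositiveCone {G : Type*} [Group G] (P : Set G) : Prop :=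
  (∀ a ∈ P, ∀ b ∈ P, a * b ∈ P) ∧
  (∀ g : G, g ∈ P ∨ g⁻¹ ∈ P ∨ g = 1) ∧
  (∀ g ∈ P, g⁻¹ ∉ P) ∧ (1 : G) ∉ P

/-- `C` is a subgroup of `H` which is convex with respect to the set `Q`
(a positive cone of `H`): whenever `c₁, c₂ ∈ C` and `g ∈ H` satisfy
`c₁⁻¹ * g ∈ Q ∪ {1}` and `g⁻¹ * c₂ ∈ Q ∪ {1}`, then `g ∈ C`. -/
def IsConvexIn {G : Type*} [Group G] (H : Subgroup G) (Q : Set G) (C : Subgroup G) : Prop :=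
  C ≤ H ∧ ∀ c₁ ∈ C, ∀ c₂ ∈ C, ∀ g ∈ H,
    c₁⁻¹ * g ∈ Q ∪ {1} → g⁻¹ * c₂ ∈ Q ∪ {1} → g ∈ C

lemma rel_gg (k l : ℤ → ℤ) (n : ℤ) :
    gg k l (n - 1) ^ (k n) = gg k l n ^ (l n) := by
  have h : ((QuotientGroup.mk (FreeGroup.of (n - 1) ^ k n * FreeGroup.of n ^ (-(l n)))) :
      Gtil k l) = 1 := by
    rw [QuotientGroup.eq_one_iff]
    exact Subgroup.subset_normalClosure ⟨n, rfl⟩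
  have h2 : gg k l (n - 1) ^ k n * (gg k l n) ^ (-(l n)) = 1 := by
    have h' := h
    simp only [QuotientGroup.mk_mul, QuotientGroup.mk_zpow] at h'
    exact h'
  rw [zpow_neg, mul_inv_eq_one] at h2
  exact h2

lemma aElt_eq (k l : ℤ → ℤ) (i m : ℤ) :
    aElt k l i m =
      ((List.range (i + m).toNat).map
        (fun t : ℕ => gg k l (-m + (t : ℤ)) ^ (-(k (-m + (t : ℤ) + 1) - 1)))).prod * gg k l i := by
  unfold aElt
  congr 1
  induction (List.range (i + m).toNat) with
  | nil => rfl
  | cons a L ih => simp_all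

theorem stmt14 (k l : ℤ → ℤ) (hk : ∀ n : ℤ, 2 ≤ k n) (hl : ∀ n : ℤ, 2 ≤ l n) :
    -- (i) `a_{i,m} = a_{i+1,m} * g_{i+1}^{l(i+1)-1}`
    (∀ m : ℤ, 0 ≤ m → ∀ i : ℤ, -m ≤ i → i ≤ m - 1 →
      aElt k l i m = aElt k l (i + 1) m * gg k l (i + 1) ^ (l (i + 1) - 1)) ∧
    -- (ii) `a_{i,m} = g_{-m-1}^{k(-m)-1} * a_{i,m+1}`
    (∀ m : ℤ, 0 ≤ m → ∀ i : ℤ, -m ≤ i → i ≤ m →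
      aElt k l i m = gg k l (-m - 1) ^ (k (-m) - 1) * aElt k l i (m + 1)) := by
  constructor
  · intro m hm i hi him
    have h1 : (i + 1 + m).toNat = (i + m).toNat + 1 := by omega
    have h2 : (-m : ℤ) + ((i + m).toNat : ℤ) = i := by omega
    rw [aElt_eq, aElt_eq]
    rw [h1, List.range_succ, List.map_append, List.prod_append]
    simp only [List.map_cons, List.map_nil, List.prod_cons, List.prod_nil, mul_one]
    rw [h2]
    have hrel := rel_gg k l (i + 1)
    have he : (i + 1 - 1 : ℤ) = i := by ring
    rw [he] at hrel
    have key : gg k l i ^ (-(k (i + 1) - 1)) * gg k l (i + 1) * gg k l (i + 1) ^ (l (i + 1) - 1)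
        = gg k l i := by
      rw [mul_assoc, ← zpow_one_add]
      have : (1 + (l (i + 1) - 1)) = l (i + 1) := by ring
      rw [this, ← hrel, ← zpow_add]
      have : (-(k (i + 1) - 1) + k (i + 1)) = 1 := by ring
      rw [this, zpow_one]
    rw [mul_assoc, mul_assoc, ← mul_assoc (gg k l i ^ (-(k (i + 1) - 1))), key]
  · intro m hm i hi him
    have h1 : (i + (m + 1)).toNat = (i + m).toNat + 1 := by omega
    rw [aElt_eq, aElt_eq]
    rw [h1, List.range_succ_eq_map]
    simp only [List.map_cons, List.prod_cons, List.map_map]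
    have hmap : ∀ t : ℕ,
        ((fun t : ℕ => gg k l (-(m + 1) + (t : ℤ)) ^ (-(k (-(m + 1) + (t : ℤ) + 1) - 1))) ∘
          Nat.succ) t
        = gg k l (-m + (t : ℤ)) ^ (-(k (-m + (t : ℤ) + 1) - 1)) := by
      intro t
      have ha : (-(m + 1) + ((Nat.succ t : ℕ) : ℤ)) = -m + (t : ℤ) := by push_cast; ring
      simp only [Function.comp_apply, ha]
    rw [List.map_congr_left (fun t _ => hmap t)]
    have h0 : (-(m + 1) + ((0 : ℕ) : ℤ)) = -m - 1 := by push_cast; ring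
    have h0' : (-(m + 1) + ((0 : ℕ) : ℤ) + 1) = -m := by push_cast; ring
    rw [h0', h0, ← mul_assoc, ← mul_assoc, ← zpow_add]
    have : (k (-m) - 1 + -(k (-m) - 1)) = 0 := by ring
    rw [this, zpow_zero, one_mul]
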